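/- Let Q = M₁ + ⋯ + M_k ⊆ ℝ^n be an admissible Minkowski decomposition with M_i having non-zero vertices v_{i,1},…,v_{i,m_i}. Define the Laurent polynomial 𝔓𝔒(z₁,…,z_{n+1}) = z_{n+1} ∏_{i=1}^k (1 + Σ_{j=1}^{m_i} z^{v_{i,j}}), where z^v = z₁^{v₁}⋯z_n^{v_n}. Then for K* equal to the units of an integral domain, 𝔓𝔒 has a critical point in (K*)^{n+1} if and only if there exist distinct i, j ∈ {1,…,k} such that the system P_i = P_j = 0 has a solution in (K*)^{n+1}, where P_i = 1 + Σ_{l=1}^{m_i} z^{v_{i,l}}. -/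

import Mathlib

noncomputable section

/-- Laurent polynomials in `N` variables over `K`, as the monoid algebra on `ℤ^N`. -/
abbrev LaurentPoly (K : Type*) [CommRing K] (N : ℕ) := AddMonoidAlgebra K (Fin N → ℤ)

/-- Evaluation of a Laurent polynomial at a point of `(K*)^N` (units of `K`). -/
def lEval {K : Type*} [CommRing K] {N : ℕ} (z : Fin N → Kˣ) (f : LaurentPoly K N) : K :=
  f.coeff.sum fun u a => a * ∏ i, ((z i ^ u i : Kˣ) : K)

/-- The formal partial derivative `∂/∂z_m` of a Laurent polynomial. -/
def lDeriv {K : Type*} [CommRing K] {N : ℕ} (m : Fin N) (f : LaurentPoly K N) :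
    LaurentPoly K N :=
  f.coeff.sum fun u a => AddMonoidAlgebra.single (u - Pi.single m 1) ((u m : K) * a)

/-- The factor `P_i = 1 + Σ_j z^{v_{i,j}}`, viewed as a Laurent polynomial in `n + 1`
variables (the extra last variable `z_{n+1}` does not occur). -/
def Pfac {K : Type*} [CommRing K] {n mi : ℕ} (vi : Fin mi → (Fin n → ℤ)) :
    LaurentPoly K (n + 1) :=
  1 + ∑ j, AddMonoidAlgebra.single (Fin.snoc (vi j) 0) (1 : K)

/-- The potential `𝔓𝔒 = z_{n+1} ∏_i (1 + Σ_j z^{v_{i,j}})`. -/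
def Wpot {K : Type*} [CommRing K] {n k : ℕ} {m : Fin k → ℕ}
    (v : (i : Fin k) → Fin (m i) → (Fin n → ℤ)) : LaurentPoly K (n + 1) :=
  AddMonoidAlgebra.single (Pi.single (Fin.last n) (1 : ℤ) : Fin (n + 1) → ℤ) (1 : K) * ∏ i, Pfac (v i)

section Aux

variable {K : Type*} [CommRing K] {N : ℕ}

/-- The value of a monomial at a point of `(K*)^N`, as a unit. -/
def zmon (z : Fin N → Kˣ) (u : Fin N → ℤ) : Kˣ := ∏ i, z i ^ u i

lemma zmon_add (z : Fin N → Kˣ) (u w : Fin N → ℤ) :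
    zmon z (u + w) = zmon z u * zmon z w := by
  simp [zmon, zpow_add, Finset.prod_mul_distrib]

lemma zmon_sub (z : Fin N → Kˣ) (u w : Fin N → ℤ) :
    zmon z (u - w) = zmon z u * (zmon z w)⁻¹ := by
  rw [eq_mul_inv_iff_mul_eq, ← zmon_add, sub_add_cancel]

lemma zmon_pisingle (z : Fin N → Kˣ) (d : Fin N) : zmon z (Pi.single d 1) = z d := by
  unfold zmon
  rw [Finset.prod_eq_single d]
  · simp
  · intro i _ hne; simp [Pi.single_eq_of_ne hne]
  · simp

lemma lEval_single (z : Fin N → Kˣ) (u : Fin N → ℤ) (a : K) :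
    lEval z (AddMonoidAlgebra.single u a) = a * ((zmon z u : Kˣ) : K) := by
  unfold lEval zmon
  rw [AddMonoidAlgebra.coeff_single, Finsupp.sum_single_index (by simp)]
  simp

/-- Evaluation as an algebra homomorphism. -/
def lEvalHom (z : Fin N → Kˣ) : LaurentPoly K N →ₐ[K] K :=
  AddMonoidAlgebra.lift K K (Fin N → ℤ)
    { toFun := fun u => ((zmon z (Multiplicative.toAdd u) : Kˣ) : K)
      map_one' := by simp [zmon]
      map_mul' := fun u w => by
        show ((zmon z (Multiplicative.toAdd u + Multiplicative.toAdd w) : Kˣ) : K) = _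
        rw [zmon_add]; push_cast; ring }

lemma lEval_eq (z : Fin N → Kˣ) (f : LaurentPoly K N) : lEval z f = lEvalHom z f := by
  rw [lEvalHom, AddMonoidAlgebra.lift_apply]
  unfold lEval
  refine Finsupp.sum_congr fun u _ => ?_
  simp [zmon, smul_eq_mul]

lemma lEval_mul (z : Fin N → Kˣ) (f g : LaurentPoly K N) :
    lEval z (f * g) = lEval z f * lEval z g := by
  simp [lEval_eq]

lemma lEval_one (z : Fin N → Kˣ) : lEval z (1 : LaurentPoly K N) = 1 := by
  simp [lEval_eq]

lemma lEval_add (z : Fin N → Kˣ) (f g : LaurentPoly K N) :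
    lEval z (f + g) = lEval z f + lEval z g := by
  simp [lEval_eq]

lemma lEval_sum (z : Fin N → Kˣ) {ι : Type*} (s : Finset ι) (f : ι → LaurentPoly K N) :
    lEval z (∑ i ∈ s, f i) = ∑ i ∈ s, lEval z (f i) := by
  simp [lEval_eq]

lemma lEval_prod (z : Fin N → Kˣ) {ι : Type*} (s : Finset ι) (f : ι → LaurentPoly K N) :
    lEval z (∏ i ∈ s, f i) = ∏ i ∈ s, lEval z (f i) := by
  simp [lEval_eq]

lemma lDeriv_single (d : Fin N) (u : Fin N → ℤ) (a : K) :
    lDeriv d (AddMonoidAlgebra.single u a) =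
      AddMonoidAlgebra.single (u - Pi.single d 1) ((u d : K) * a) := by
  unfold lDeriv
  rw [AddMonoidAlgebra.coeff_single, Finsupp.sum_single_index (by simp)]

lemma lDeriv_zero (d : Fin N) : lDeriv d (0 : LaurentPoly K N) = 0 := by
  unfold lDeriv; exact Finsupp.sum_zero_index

lemma lDeriv_add (d : Fin N) (f g : LaurentPoly K N) :
    lDeriv d (f + g) = lDeriv d f + lDeriv d g := by
  unfold lDeriv
  rw [AddMonoidAlgebra.coeff_add]
  exact Finsupp.sum_add_index' (by simp) (by intro u b₁ b₂; rw [mul_add, AddMonoidAlgebra.single_add])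

lemma lDeriv_sum (d : Fin N) {ι : Type*} (s : Finset ι) (f : ι → LaurentPoly K N) :
    lDeriv d (∑ i ∈ s, f i) = ∑ i ∈ s, lDeriv d (f i) := by
  classical
  induction s using Finset.induction_on with
  | empty => simp [lDeriv_zero]
  | insert _ _ ha ih => rw [Finset.sum_insert ha, lDeriv_add, ih, Finset.sum_insert ha]

lemma lDeriv_one (d : Fin N) : lDeriv d (1 : LaurentPoly K N) = 0 := by
  rw [AddMonoidAlgebra.one_def, lDeriv_single]
  simp

lemma lDeriv_mul (d : Fin N) (f g : LaurentPoly K N) :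
    lDeriv d (f * g) = lDeriv d f * g + f * lDeriv d g := by
  induction f using AddMonoidAlgebra.induction_linear with
  | zero => simp [lDeriv_zero]
  | add f₁ f₂ h1 h2 => rw [add_mul, lDeriv_add, h1, h2, lDeriv_add]; ring
  | single u a =>
    induction g using AddMonoidAlgebra.induction_linear with
    | zero => simp [lDeriv_zero]
    | add g₁ g₂ h1 h2 => rw [mul_add, lDeriv_add, h1, h2, lDeriv_add]; ring
    | single w b =>
      rw [AddMonoidAlgebra.single_mul_single, lDeriv_single, lDeriv_single, lDeriv_single,
        AddMonoidAlgebra.single_mul_single, AddMonoidAlgebra.single_mul_single]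
      have h1 : u - Pi.single d 1 + w = u + w - Pi.single d 1 := by abel
      have h2 : u + (w - Pi.single d 1) = u + w - Pi.single d 1 := by abel
      rw [h1, h2, ← AddMonoidAlgebra.single_add]
      congr 1
      have : ((u + w) d : K) = (u d : K) + (w d : K) := by push_cast [Pi.add_apply]; ring
      rw [this]; ring

lemma lDeriv_prod (d : Fin N) {ι : Type*} [DecidableEq ι] (s : Finset ι)
    (f : ι → LaurentPoly K N) :
    lDeriv d (∏ i ∈ s, f i) = ∑ i ∈ s, lDeriv d (f i) * ∏ j ∈ s.erase i, f j := by
  induction s using Finset.induction_on with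
  | empty => simp [lDeriv_one]
  | @insert a s ha ih =>
    rw [Finset.prod_insert ha, lDeriv_mul, ih, Finset.sum_insert ha, Finset.erase_insert ha]
    congr 1
    rw [Finset.mul_sum]
    refine Finset.sum_congr rfl fun i hi => ?_
    have hne : a ≠ i := fun h => ha (h ▸ hi)
    rw [Finset.erase_insert_of_ne hne, Finset.prod_insert
      (fun h => ha (Finset.mem_of_mem_erase h))]
    ring

end Aux

section PfacAux

variable {K : Type*} [CommRing K] {n : ℕ}

lemma zmon_snoc (z : Fin (n + 1) → Kˣ) (w : Fin n → ℤ) :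
    zmon z (Fin.snoc w 0) = ∏ i, z (Fin.castSucc i) ^ w i := by
  unfold zmon
  rw [Fin.prod_univ_castSucc]
  simp

lemma lEval_Pfac (z : Fin (n + 1) → Kˣ) {mi : ℕ} (vi : Fin mi → Fin n → ℤ) :
    lEval z (Pfac (K := K) vi) = 1 + ∑ j, ((zmon z (Fin.snoc (vi j) 0) : Kˣ) : K) := by
  unfold Pfac
  rw [lEval_add, lEval_one, lEval_sum]
  simp [lEval_single]

lemma lDeriv_last_Pfac {mi : ℕ} (vi : Fin mi → Fin n → ℤ) :
    lDeriv (Fin.last n) (Pfac (K := K) vi) = 0 := by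
  unfold Pfac
  rw [lDeriv_add, lDeriv_one, zero_add, lDeriv_sum]
  refine Finset.sum_eq_zero fun j _ => ?_
  rw [lDeriv_single]
  have : ((Fin.snoc (vi j) 0 : Fin (n + 1) → ℤ) (Fin.last n)) = 0 := Fin.snoc_last _ _
  rw [this]
  simp

lemma lEval_lDeriv_cast_Pfac (z : Fin (n + 1) → Kˣ) {mi : ℕ} (vi : Fin mi → Fin n → ℤ)
    (dm : Fin n) :
    lEval z (lDeriv (Fin.castSucc dm) (Pfac (K := K) vi)) =
      (((z (Fin.castSucc dm))⁻¹ : Kˣ) : K) *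
        ∑ j, (vi j dm : K) * ((zmon z (Fin.snoc (vi j) 0) : Kˣ) : K) := by
  unfold Pfac
  rw [lDeriv_add, lDeriv_one, zero_add, lDeriv_sum, lEval_sum, Finset.mul_sum]
  refine Finset.sum_congr rfl fun j _ => ?_
  rw [lDeriv_single, lEval_single]
  have hc : ((Fin.snoc (vi j) 0 : Fin (n + 1) → ℤ) (Fin.castSucc dm)) = vi j dm :=
    Fin.snoc_castSucc _ _ _
  rw [hc, zmon_sub, zmon_pisingle]
  push_cast
  ring

lemma Wpot_eval_deriv_last {k : ℕ} {m : Fin k → ℕ}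
    (v : (i : Fin k) → Fin (m i) → (Fin n → ℤ)) (z : Fin (n + 1) → Kˣ) :
    lEval z (lDeriv (Fin.last n) (Wpot (K := K) v)) = ∏ i, lEval z (Pfac (v i)) := by
  unfold Wpot
  rw [lDeriv_mul, lDeriv_single]
  have h1 : (Pi.single (Fin.last n) (1 : ℤ) : Fin (n + 1) → ℤ) - Pi.single (Fin.last n) 1 = 0 :=
    sub_self _
  have h2 : ((Pi.single (Fin.last n) (1 : ℤ) : Fin (n + 1) → ℤ) (Fin.last n) : K) = 1 := by
    simp
  rw [h1, h2, one_mul, lDeriv_prod]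
  have h3 : ∀ i ∈ Finset.univ, lDeriv (Fin.last n) (Pfac (K := K) (v i)) *
      ∏ j ∈ Finset.univ.erase i, Pfac (v j) = 0 := fun i _ => by
    rw [lDeriv_last_Pfac, zero_mul]
  rw [Finset.sum_eq_zero h3, mul_zero, add_zero, ← AddMonoidAlgebra.one_def, one_mul, lEval_prod]

lemma Wpot_eval_deriv_cast {k : ℕ} {m : Fin k → ℕ}
    (v : (i : Fin k) → Fin (m i) → (Fin n → ℤ)) (z : Fin (n + 1) → Kˣ) (dm : Fin n) :
    lEval z (lDeriv (Fin.castSucc dm) (Wpot (K := K) v)) =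
      (z (Fin.last n) : K) * ∑ i, lEval z (lDeriv (Fin.castSucc dm) (Pfac (v i))) *
        ∏ j ∈ Finset.univ.erase i, lEval z (Pfac (v j)) := by
  unfold Wpot
  rw [lDeriv_mul, lDeriv_single]
  have h2 : ((Pi.single (Fin.last n) (1 : ℤ) : Fin (n + 1) → ℤ) (Fin.castSucc dm) : K) = 0 := by
    rw [Pi.single_eq_of_ne (Fin.castSucc_lt_last dm).ne]
    simp
  rw [h2, zero_mul, AddMonoidAlgebra.single_zero, zero_mul, zero_add, lEval_mul, lEval_single,
    zmon_pisingle, one_mul, lDeriv_prod, lEval_sum]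
  congr 1
  refine Finset.sum_congr rfl fun i _ => ?_
  rw [lEval_mul, lEval_prod]

end PfacAux

/-- Let `Q = M₁ + ⋯ + M_k` be an admissible Minkowski decomposition, `M_i` having
non-zero vertices `v_{i,1},…,v_{i,m_i}` which extend to a `ℤ`-basis of `ℤⁿ`.  Then the
potential `𝔓𝔒 = z_{n+1} ∏_i P_i`, `P_i = 1 + Σ_j z^{v_{i,j}}`, has a critical point in
`(K*)^{n+1}` (units of the integral domain `K`) if and only if there are distinct
`i ≠ j` such that the system `P_i = P_j = 0` has a solution in `(K*)^{n+1}`. -/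
theorem stmt10 {K : Type*} [CommRing K] [IsDomain K] {n k : ℕ} {m : Fin k → ℕ}
    (hmn : ∀ i, m i ≤ n) (v : (i : Fin k) → Fin (m i) → (Fin n → ℤ))
    (hadm : ∀ i, ∃ B : Matrix (Fin n) (Fin n) ℤ,
      (∀ j : Fin (m i), (fun l => B (Fin.castLE (hmn i) j) l) = v i j) ∧ IsUnit B.det) :
    (∃ z : Fin (n + 1) → Kˣ, ∀ d : Fin (n + 1), lEval z (lDeriv d (Wpot v)) = 0) ↔
    (∃ i j : Fin k, i ≠ j ∧ ∃ z : Fin (n + 1) → Kˣ,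
      lEval z (Pfac (v i)) = 0 ∧ lEval z (Pfac (v j)) = 0) := by
  constructor
  · rintro ⟨z, hz⟩
    set A : Fin k → K := fun i => lEval z (Pfac (v i)) with hA
    have hprod : ∏ i, A i = 0 := by
      have := hz (Fin.last n)
      rwa [Wpot_eval_deriv_last] at this
    obtain ⟨i0, -, hAi0⟩ := Finset.prod_eq_zero_iff.mp hprod
    by_cases hex : ∃ j, j ≠ i0 ∧ A j = 0
    · obtain ⟨j, hji, hAj⟩ := hex
      exact ⟨i0, j, Ne.symm hji, z, hAi0, hAj⟩
    · exfalso
      push_neg at hex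
      -- the other factors are nonzero; deduce the derivative conditions on P_{i0}
      have hB0 : ∀ dm : Fin n, lEval z (lDeriv (Fin.castSucc dm) (Pfac (v i0))) = 0 := by
        intro dm
        have hzd := hz (Fin.castSucc dm)
        rw [Wpot_eval_deriv_cast] at hzd
        have hsum : ∑ i, lEval z (lDeriv (Fin.castSucc dm) (Pfac (v i))) *
            ∏ j ∈ Finset.univ.erase i, A j = 0 := by
          rcases mul_eq_zero.mp hzd with h | h
          · exact absurd h (Units.ne_zero _)
          · exact h
        have hred : ∑ i, lEval z (lDeriv (Fin.castSucc dm) (Pfac (v i))) *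
            ∏ j ∈ Finset.univ.erase i, A j =
            lEval z (lDeriv (Fin.castSucc dm) (Pfac (v i0))) *
            ∏ j ∈ Finset.univ.erase i0, A j := by
          refine Finset.sum_eq_single i0 (fun t _ ht => ?_) (by simp)
          rw [Finset.prod_eq_zero (Finset.mem_erase.mpr ⟨Ne.symm ht, Finset.mem_univ _⟩) hAi0,
            mul_zero]
        have hpne : ∏ j ∈ Finset.univ.erase i0, A j ≠ 0 :=
          Finset.prod_ne_zero_iff.mpr fun j hj => hex j (Finset.mem_erase.mp hj).1
        rw [hred] at hsum
        rcases mul_eq_zero.mp hsum with h | h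
        · exact h
        · exact absurd h hpne
      -- explicit linear relations
      set a : Fin (m i0) → Kˣ := fun j => zmon z (Fin.snoc (v i0 j) 0) with ha
      have hS : ∀ dm : Fin n, ∑ j, (v i0 j dm : K) * ((a j : Kˣ) : K) = 0 := by
        intro dm
        have h := hB0 dm
        rw [lEval_lDeriv_cast_Pfac] at h
        rcases mul_eq_zero.mp h with h | h
        · exact absurd h (Units.ne_zero _)
        · exact h
      have hA0 : (1 : K) + ∑ j, ((a j : Kˣ) : K) = 0 := by
        have h : lEval z (Pfac (v i0)) = 0 := hAi0
        rw [lEval_Pfac] at h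
        exact h
      -- matrix argument: the vectors are linearly independent over K
      obtain ⟨B, hBrow, hBdet⟩ := hadm i0
      set B' : Matrix (Fin n) (Fin n) K := B.map (Int.cast : ℤ → K) with hB'
      have hdet' : IsUnit B'.det := by
        have : ((Int.castRingHom K) B.det) = B'.det := RingHom.map_det (Int.castRingHom K) B
        rw [← this]
        exact hBdet.map (Int.castRingHom K)
      haveI : Invertible B' := B'.invertibleOfIsUnitDet hdet'
      set c : Fin n → K := fun l => if h : (l : ℕ) < m i0 then ((a ⟨l, h⟩ : Kˣ) : K) else 0
        with hc
      have hvec : Matrix.vecMul c B' = 0 := by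
        funext dm
        show ∑ l, c l * B' l dm = 0
        have hmap : ∑ l ∈ Finset.univ.map (Fin.castLEEmb (hmn i0)), c l * B' l dm =
            ∑ l, c l * B' l dm := by
          refine Finset.sum_subset (Finset.subset_univ _) fun l _ hl => ?_
          have hge : ¬ (l : ℕ) < m i0 := by
            intro hlt
            exact hl (Finset.mem_map.mpr ⟨⟨(l : ℕ), hlt⟩, Finset.mem_univ _, by
              simp [Fin.castLEEmb]⟩)
          rw [hc]
          simp only [dif_neg hge, zero_mul]
        rw [← hmap, Finset.sum_map]
        have : ∀ j : Fin (m i0), c (Fin.castLEEmb (hmn i0) j) *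
            B' (Fin.castLEEmb (hmn i0) j) dm = (v i0 j dm : K) * ((a j : Kˣ) : K) := by
          intro j
          have h1 : c (Fin.castLEEmb (hmn i0) j) = ((a j : Kˣ) : K) := by
            rw [hc]
            simp only [Fin.castLEEmb_apply, Fin.coe_castLE]
            rw [dif_pos j.isLt]
          have h2 : B' (Fin.castLEEmb (hmn i0) j) dm = (v i0 j dm : K) := by
            rw [hB']
            show ((B (Fin.castLE (hmn i0) j) dm : ℤ) : K) = _
            have := congrFun (hBrow j) dm
            rw [this]
          rw [h1, h2]; ring
        rw [Finset.sum_congr rfl fun j _ => this j]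
        exact hS dm
      have hc0 : c = 0 := by
        have : c = Matrix.vecMul (Matrix.vecMul c B') (⅟B') := by
          rw [Matrix.vecMul_vecMul, mul_invOf_self, Matrix.vecMul_one]
        rw [this, hvec, Matrix.zero_vecMul]
      have haz : ∀ j : Fin (m i0), ((a j : Kˣ) : K) = 0 := by
        intro j
        have := congrFun hc0 (Fin.castLE (hmn i0) j)
        rw [hc] at this
        simp only [Fin.coe_castLE, dif_pos j.isLt, Pi.zero_apply] at this
        exact this
      rw [Finset.sum_congr rfl fun j _ => haz j, Finset.sum_const_zero, add_zero] at hA0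
      exact one_ne_zero hA0
  · rintro ⟨i, j, hij, z, hi, hj⟩
    refine ⟨z, fun d => ?_⟩
    induction d using Fin.lastCases with
    | last =>
      rw [Wpot_eval_deriv_last]
      exact Finset.prod_eq_zero (Finset.mem_univ i) hi
    | cast dm =>
      rw [Wpot_eval_deriv_cast]
      have : ∀ t ∈ (Finset.univ : Finset (Fin k)),
          lEval z (lDeriv (Fin.castSucc dm) (Pfac (v t))) *
            ∏ s ∈ Finset.univ.erase t, lEval z (Pfac (v s)) = 0 := by
        intro t _
        by_cases ht : t = i
        · subst ht
          rw [Finset.prod_eq_zero (Finset.mem_erase.mpr ⟨Ne.symm hij, Finset.mem_univ _⟩) hj,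
            mul_zero]
        · rw [Finset.prod_eq_zero (Finset.mem_erase.mpr ⟨Ne.symm ht, Finset.mem_univ _⟩) hi,
            mul_zero]
      rw [Finset.sum_eq_zero this, mul_zero]

end
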